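/- Let φ be a descending closure operator on a poset P. Define a matching on the nonempty finite chains of P not contained in φ(P) as follows: for a chain c = (x₁ < ⋯ < x_k) with minimal index i such that x_i ∉ φ(P), match c with c \ {x_{i-1}} if i > 1 and φ(x_i) = x_{i-1}, and otherwise match c with c ∪ {φ(x_i)}. Then this is a well-defined involution on the set of chains of P not contained in φ(P), and each matched pair consists of a chain and the same chain with one element added (the added element being φ(x_i)). -/

import Mathlib

section Stmt4Aux
variable {P : Type*} [PartialOrder P] (φ : P → P)

def Stmt4Good (c : Finset P) : Prop :=
  c.Nonempty ∧ IsChain (· ≤ ·) (c : Set P) ∧ ¬ (c : Set P) ⊆ Set.range φ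

def Stmt4Least (c : Finset P) (a : P) : Prop :=
  a ∈ c ∧ a ∉ Set.range φ ∧ ∀ b ∈ c, b ∉ Set.range φ → a ≤ b

theorem stmt4_exists_least (c : Finset P) (hc : Stmt4Good φ c) :
    ∃ a, Stmt4Least φ c a := by
  classical
  obtain ⟨hne, hchain, hsub⟩ := hc
  have ht : (c.filter (fun x => x ∉ Set.range φ)).Nonempty := by
    rw [Set.not_subset] at hsub
    obtain ⟨x, hx, hx'⟩ := hsub
    exact ⟨x, Finset.mem_filter.2 ⟨by exact_mod_cast hx, hx'⟩⟩
  obtain ⟨a, ha, hmin⟩ : ∃ a ∈ c.filter (fun x => x ∉ Set.range φ),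
      ∀ x ∈ c.filter (fun x => x ∉ Set.range φ), ¬ x < a := by
    obtain ⟨a, ha, hmin'⟩ := Finset.exists_minimal ht
    exact ⟨a, ha, fun x hx hlt => hlt.not_ge (hmin' hx hlt.le)⟩
  rw [Finset.mem_filter] at ha
  refine ⟨a, ha.1, ha.2, fun b hb hbr => ?_⟩
  rcases eq_or_ne a b with rfl | hab
  · exact le_refl _
  rcases hchain (by exact_mod_cast ha.1) (by exact_mod_cast hb) hab with h | h
  · exact h
  · have hba : b = a := by
      by_contra hne'
      exact hmin b (Finset.mem_filter.2 ⟨hb, hbr⟩) (h.lt_of_ne hne')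
    exact hba.ge

theorem stmt4_least_unique {c : Finset P} {a₁ a₂ : P}
    (h₁ : Stmt4Least φ c a₁) (h₂ : Stmt4Least φ c a₂) : a₁ = a₂ :=
  le_antisymm (h₁.2.2 a₂ h₂.1 h₂.2.1) (h₂.2.2 a₁ h₁.1 h₁.2.1)

set_option linter.unusedSectionVars false in
theorem stmt4_range_fixed (hidem : ∀ x, φ (φ x) = φ x) {x : P}
    (hx : x ∈ Set.range φ) : φ x = x := by
  obtain ⟨y, rfl⟩ := hx; exact hidem y

theorem stmt4_ne {c : Finset P} {a : P} (ha : Stmt4Least φ c a) : φ a ≠ a :=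
  fun h => ha.2.1 ⟨a, h⟩

variable [DecidableEq P]

/-- the inserted set is good -/
theorem stmt4_insert_good (hmono : Monotone φ) (hidem : ∀ x, φ (φ x) = φ x)
    (hdesc : ∀ x, φ x ≤ x) {c : Finset P} (hc : Stmt4Good φ c) {a : P}
    (ha : Stmt4Least φ c a) : Stmt4Good φ (insert (φ a) c) := by
  obtain ⟨hne, hchain, hsub⟩ := hc
  refine ⟨⟨a, Finset.mem_insert_of_mem ha.1⟩, ?_, ?_⟩
  · rw [Finset.coe_insert]
    refine hchain.insert (fun b hb hne' => ?_)
    rcases eq_or_ne a b with rfl | hab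
    · exact Or.inl (hdesc a)
    rcases hchain (by exact_mod_cast ha.1) hb hab with h | h
    · exact Or.inl ((hdesc a).trans h)
    · by_cases hbr : b ∈ Set.range φ
      · refine Or.inr ?_
        have hh : φ b ≤ φ a := hmono h
        rwa [stmt4_range_fixed φ hidem hbr] at hh
      · exact absurd (le_antisymm h (ha.2.2 b (by exact_mod_cast hb) hbr))
          (fun e => hab e.symm)
  · intro h
    exact ha.2.1 (h (by exact_mod_cast Finset.mem_insert_of_mem ha.1))

theorem stmt4_erase_good {c : Finset P} (hc : Stmt4Good φ c) {a : P}
    (ha : Stmt4Least φ c a) : Stmt4Good φ (c.erase (φ a)) := by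
  have hmem : a ∈ c.erase (φ a) :=
    Finset.mem_erase.2 ⟨fun e => stmt4_ne φ ha e.symm, ha.1⟩
  refine ⟨⟨a, hmem⟩, ?_, fun h => ha.2.1 (h (by exact_mod_cast hmem))⟩
  exact hc.2.1.mono (by exact_mod_cast Finset.erase_subset _ _)

theorem stmt4_least_insert {c : Finset P} {a : P} (ha : Stmt4Least φ c a) :
    Stmt4Least φ (insert (φ a) c) a := by
  refine ⟨Finset.mem_insert_of_mem ha.1, ha.2.1, fun b hb hbr => ?_⟩
  rcases Finset.mem_insert.1 hb with rfl | hb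
  · exact absurd ⟨a, rfl⟩ hbr
  · exact ha.2.2 b hb hbr

theorem stmt4_least_erase {c : Finset P} {a : P} (ha : Stmt4Least φ c a) :
    Stmt4Least φ (c.erase (φ a)) a := by
  refine ⟨Finset.mem_erase.2 ⟨fun e => stmt4_ne φ ha e.symm, ha.1⟩, ha.2.1,
    fun b hb hbr => ha.2.2 b (Finset.mem_of_mem_erase hb) hbr⟩

end Stmt4Aux

open Classical in
/-- The matching on nonempty finite chains of `P` not contained in `φ(P)`:
for a chain `c` whose least element not in `φ(P)` is `a`, `c` is matched with
`c \ {φ a}` if `φ a ∈ c` (the case `i > 1`, `φ(x_i) = x_{i-1}`), and with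
`c ∪ {φ a}` otherwise.  This is a well-defined involution on the set of such
chains, and each matched pair is a chain together with the same chain with the
one element `φ a` added. -/
theorem stmt_4 {P : Type*} [PartialOrder P] (φ : P → P)
    (hmono : Monotone φ) (hidem : ∀ x, φ (φ x) = φ x) (hdesc : ∀ x, φ x ≤ x) :
    ∃ m : {c : Finset P // c.Nonempty ∧ IsChain (· ≤ ·) (c : Set P) ∧
            ¬ (c : Set P) ⊆ Set.range φ} →
          {c : Finset P // c.Nonempty ∧ IsChain (· ≤ ·) (c : Set P) ∧
            ¬ (c : Set P) ⊆ Set.range φ},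
      (∀ c, m (m c) = c) ∧
      (∀ (c : {c : Finset P // c.Nonempty ∧ IsChain (· ≤ ·) (c : Set P) ∧
            ¬ (c : Set P) ⊆ Set.range φ}) (a : P), a ∈ c.1 → a ∉ Set.range φ →
        (∀ b ∈ c.1, b ∉ Set.range φ → a ≤ b) →
        ((φ a ∈ c.1 ∧ φ a ≠ a ∧ (m c).1 = c.1.erase (φ a)) ∨
         (φ a ∉ c.1 ∧ (m c).1 = insert (φ a) c.1))) := by
  classical
  set T := {c : Finset P // c.Nonempty ∧ IsChain (· ≤ ·) (c : Set P) ∧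
            ¬ (c : Set P) ⊆ Set.range φ} with hT
  have key : ∀ c : T, Stmt4Good φ c.1 := fun c => c.2
  -- the chosen least element
  let ℓ : T → P := fun c => Classical.choose (stmt4_exists_least φ c.1 (key c))
  have hℓ : ∀ c : T, Stmt4Least φ c.1 (ℓ c) :=
    fun c => Classical.choose_spec (stmt4_exists_least φ c.1 (key c))
  let m : T → T := fun c =>
    if h : φ (ℓ c) ∈ c.1 then ⟨c.1.erase (φ (ℓ c)), stmt4_erase_good φ (key c) (hℓ c)⟩
    else ⟨insert (φ (ℓ c)) c.1, stmt4_insert_good φ hmono hidem hdesc (key c) (hℓ c)⟩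
  have hm : ∀ (c : T) (a : P), Stmt4Least φ c.1 a →
      ((φ a ∈ c.1 ∧ φ a ≠ a ∧ (m c).1 = c.1.erase (φ a)) ∨
       (φ a ∉ c.1 ∧ (m c).1 = insert (φ a) c.1)) := by
    intro c a ha
    have hea : ℓ c = a := stmt4_least_unique φ (hℓ c) ha
    by_cases h : φ a ∈ c.1
    · exact Or.inl ⟨h, stmt4_ne φ ha, by simp only [m, hea, dif_pos h]⟩
    · exact Or.inr ⟨h, by simp only [m, hea, dif_neg h]⟩
  refine ⟨m, fun c => ?_, fun c a h1 h2 h3 => hm c a ⟨h1, h2, h3⟩⟩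
  -- involution
  by_cases h : φ (ℓ c) ∈ c.1
  · have hmc : (m c).1 = c.1.erase (φ (ℓ c)) := by simp only [m, dif_pos h]
    have hle : Stmt4Least φ (m c).1 (ℓ c) := by
      rw [hmc]; exact stmt4_least_erase φ (hℓ c)
    rcases hm (m c) (ℓ c) hle with ⟨h', _, h''⟩ | ⟨h', h''⟩
    · exfalso; rw [hmc] at h'; exact (Finset.mem_erase.1 h').1 rfl
    · apply Subtype.ext; rw [h'', hmc, Finset.insert_erase h]
  · have hmc : (m c).1 = insert (φ (ℓ c)) c.1 := by simp only [m, dif_neg h]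
    have hle : Stmt4Least φ (m c).1 (ℓ c) := by
      rw [hmc]; exact stmt4_least_insert φ (hℓ c)
    rcases hm (m c) (ℓ c) hle with ⟨h', _, h''⟩ | ⟨h', h''⟩
    · apply Subtype.ext; rw [h'', hmc, Finset.erase_insert h]
    · exfalso; rw [hmc] at h'; exact h' (Finset.mem_insert_self _ _)
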